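/- Let ψ_0 ∈ ℂ with Im ψ_0 > 0 and m an even positive integer. Then for all real x, y with |x|, |y| small, |y + x| + |x|^m ≤ C·|y + x + ψ_0 x^m| for some constant C > 0 independent of x, y. -/

import Mathlib

/-- If `Im ψ₀ > 0` and `m` is even and positive, then for all real `x, y` near `0`,
`|y + x| + |x|^m ≤ C·|y + x + ψ₀ x^m|` for some constant `C > 0`. -/
theorem real_bound_q_eq_x (ψ₀ : ℂ) (hψ : 0 < ψ₀.im) (m : ℕ) (hm : 0 < m)
    (hme : Even m) :
    ∃ ε > (0:ℝ), ∃ C > (0:ℝ), ∀ x y : ℝ, |x| < ε → |y| < ε →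
      |y + x| + |x| ^ m ≤
        C * ‖(y : ℂ) + (x : ℂ) + ψ₀ * (x : ℂ) ^ m‖ := by
  refine ⟨1, one_pos, 1 + (|ψ₀.re| + 1) / ψ₀.im, by positivity, fun x y _ _ => ?_⟩
  set z : ℂ := (y : ℂ) + (x : ℂ) + ψ₀ * (x : ℂ) ^ m with hz
  have hre : z.re = y + x + ψ₀.re * x ^ m := by simp [hz, ← Complex.ofReal_pow]
  have him : z.im = ψ₀.im * x ^ m := by simp [hz, ← Complex.ofReal_pow]
  have h1 : |z.im| ≤ ‖z‖ := Complex.abs_im_le_norm z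
  have h2 : |z.re| ≤ ‖z‖ := Complex.abs_re_le_norm z
  have hxm : (0:ℝ) ≤ x ^ m := hme.pow_nonneg x
  have hxabs : |x| ^ m = x ^ m := by
    rw [← abs_pow, abs_of_nonneg hxm]
  rw [him, abs_of_nonneg (by positivity)] at h1
  rw [hre] at h2
  have h4 : |ψ₀.re * x ^ m| = |ψ₀.re| * x ^ m := by
    rw [abs_mul, abs_of_nonneg hxm]
  have h3 : |y + x| ≤ |y + x + ψ₀.re * x ^ m| + |ψ₀.re| * x ^ m := by
    have h5 := abs_add_le (y + x + ψ₀.re * x ^ m) (-(ψ₀.re * x ^ m))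
    rw [add_neg_cancel_right, abs_neg, h4] at h5
    exact h5
  rw [hxabs]
  have hK : 0 ≤ ‖z‖ := norm_nonneg z
  have key : (1 + (|ψ₀.re| + 1) / ψ₀.im) * ‖z‖
      = ‖z‖ + (|ψ₀.re| + 1) * (‖z‖ / ψ₀.im) := by
    field_simp
  have hx2 : x ^ m ≤ ‖z‖ / ψ₀.im := by
    rw [le_div_iff₀ hψ, mul_comm]; exact h1
  rw [key]
  nlinarith [mul_le_mul_of_nonneg_left hx2 (abs_nonneg ψ₀.re),
    div_nonneg hK hψ.le, abs_nonneg ψ₀.re]
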